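/- For r > r₊ and θ = 0 (on the rotation axis, where ρ² = r² + a²), the defining condition of the photon region K, namely |2rΔ − (r−m)ρ²| ≤ 2ar√Δ sin θ, holds if and only if r³ − 3mr² + (a² + 2q²)r + a²m = 0; i.e., the photon region meets the axis exactly at the roots r > r₊ of this cubic. -/
import Mathlib


noncomputable section

open Real

/-- Δ = r² − 2mr + a² + q² -/
def Delta (m a q r : ℝ) : ℝ := r ^ 2 - 2 * m * r + a ^ 2 + q ^ 2

/-- ρ² = r² + a² cos²θ -/
def rhoSq (a r θ : ℝ) : ℝ := r ^ 2 + a ^ 2 * Real.cos θ ^ 2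

/-- r₊ = m + √(m² − a² − q²) -/
def rPlus (m a q : ℝ) : ℝ := m + Real.sqrt (m ^ 2 - a ^ 2 - q ^ 2)

theorem photon_region_meets_axis (m a q : ℝ) (hm : 0 < m) (ha : 0 ≤ a)
    (hmaq : a ^ 2 + q ^ 2 ≤ m ^ 2) (r : ℝ) (hr : rPlus m a q < r) :
    |2 * r * Delta m a q r - (r - m) * rhoSq a r 0|
        ≤ 2 * a * r * Real.sqrt (Delta m a q r) * Real.sin 0 ↔
      r ^ 3 - 3 * m * r ^ 2 + (a ^ 2 + 2 * q ^ 2) * r + a ^ 2 * m = 0 := by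
  have h : 2 * r * Delta m a q r - (r - m) * rhoSq a r 0
      = r ^ 3 - 3 * m * r ^ 2 + (a ^ 2 + 2 * q ^ 2) * r + a ^ 2 * m := by
    simp [Delta, rhoSq, Real.cos_zero]; ring
  rw [h, Real.sin_zero, mul_zero, abs_nonpos_iff]
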